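/- Let X be an uncountable topological space in which every closed subset is either countable or has countable complement. Then X is exponentially separable. -/
import Mathlib


/-- A space is exponentially separable. -/
def ExpSep (X : Type*) [TopologicalSpace X] : Prop :=
  ∀ F : Set (Set X), F.Countable → (∀ C ∈ F, IsClosed C) →
    ∃ A : Set X, A.Countable ∧ ∀ G ⊆ F, (⋂₀ G).Nonempty → (A ∩ ⋂₀ G).Nonempty

theorem stmt16 (X : Type*) [TopologicalSpace X] [Uncountable X]
    (h : ∀ C : Set X, IsClosed C → C.Countable ∨ Cᶜ.Countable) : ExpSep X := by
  intro F hFc hFcl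
  set F₁ : Set (Set X) := {C ∈ F | C.Countable} with hF₁
  set F₂ : Set (Set X) := {C ∈ F | ¬ C.Countable} with hF₂
  have hF₁c : (⋃₀ F₁).Countable :=
    Set.Countable.sUnion (hFc.mono (Set.sep_subset _ _)) (fun t ht => ht.2)
  -- the intersection of the co-countable members is co-countable, hence nonempty
  have hS : ((⋂₀ F₂)ᶜ).Countable := by
    rw [Set.compl_sInter]
    refine Set.Countable.sUnion ((hFc.mono (Set.sep_subset _ _)).image _) ?_
    rintro t ⟨C, hC, rfl⟩
    rcases h C (hFcl C hC.1) with h1 | h2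
    · exact absurd h1 hC.2
    · exact h2
  have hSne : (⋂₀ F₂).Nonempty := by
    by_contra hne
    rw [Set.not_nonempty_iff_eq_empty] at hne
    have : (Set.univ : Set X).Countable := by
      simpa [hne] using hS
    exact Set.not_countable_univ this
  obtain ⟨x, hx⟩ := hSne
  refine ⟨⋃₀ F₁ ∪ {x}, hF₁c.union (Set.countable_singleton x), ?_⟩
  intro G hGF ⟨y, hy⟩
  by_cases hex : ∃ C ∈ G, C.Countable
  · obtain ⟨C, hCG, hCc⟩ := hex
    refine ⟨y, Or.inl ⟨C, ⟨hGF hCG, hCc⟩, hy C hCG⟩, hy⟩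
  · push_neg at hex
    refine ⟨x, Or.inr rfl, ?_⟩
    exact Set.sInter_subset_sInter (fun C hC => show C ∈ F₂ from ⟨hGF hC, hex C hC⟩) hx
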